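/- In any Nash equilibrium of the Voronoi game on a connected graph with n vertices and k players, the radius of every player's Voronoi cell is at most n/k + 1. -/

import Mathlib

open Finset
open scoped Classical

noncomputable def cell {V : Type*} [Fintype V] (G : SimpleGraph V) {k : ℕ}
    (f : Fin k → V) (i : Fin k) (v : V) : ℚ :=
  if G.edist v (f i) = ⨅ j, G.edist v (f j) then
    (1 : ℚ) / (Finset.univ.filter fun j => G.edist v (f j) = ⨅ j', G.edist v (f j')).card
  else 0

noncomputable def payoff {V : Type*} [Fintype V] (G : SimpleGraph V) {k : ℕ}
    (f : Fin k → V) (i : Fin k) : ℚ :=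
  ∑ v, cell G f i v

def IsNashEq {V : Type*} [Fintype V] (G : SimpleGraph V) {k : ℕ} (f : Fin k → V) : Prop :=
  ∀ (i : Fin k) (x : V), payoff G (Function.update f i x) i ≤ payoff G f i

/-- The radius of the Voronoi cell of player `i`: the largest distance from `f i` to a
vertex fractionally assigned to player `i`. -/
noncomputable def cellRadius {V : Type*} [Fintype V] (G : SimpleGraph V) {k : ℕ}
    (f : Fin k → V) (i : Fin k) : ℕ :=
  (Finset.univ.filter fun v => 0 < cell G f i v).sup fun v => (G.edist v (f i)).toNat

/-- The Delaunay triangulation of a strategy profile: the graph on the players where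
`i` and `j` are adjacent if their Voronoi cells share a vertex, or contain two
adjacent vertices respectively. -/
noncomputable def delaunay {V : Type*} [Fintype V] (G : SimpleGraph V) {k : ℕ}
    (f : Fin k → V) : SimpleGraph (Fin k) where
  Adj i j := i ≠ j ∧
    ((∃ v, 0 < cell G f i v ∧ 0 < cell G f j v) ∨
      ∃ v v', G.Adj v v' ∧ 0 < cell G f i v ∧ 0 < cell G f j v')
  symm := by
    refine ⟨?_⟩
    rintro i j ⟨hne, ⟨v, h1, h2⟩ | ⟨v, v', hvv, h1, h2⟩⟩
    · exact ⟨hne.symm, Or.inl ⟨v, h2, h1⟩⟩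
    · exact ⟨hne.symm, Or.inr ⟨v', v, hvv.symm, h2, h1⟩⟩
  loopless := by refine ⟨?_⟩; rintro i ⟨h, -⟩; exact h rfl

/-- A star in a graph: a vertex set of size at least 2 with a center adjacent to
all other vertices of the set. -/
def IsStar {V : Type*} [DecidableEq V] (G : SimpleGraph V) (A : Finset V) : Prop :=
  2 ≤ A.card ∧ ∃ v0 ∈ A, ∀ v ∈ A, v ≠ v0 → G.Adj v0 v

/- ======================= auxiliary lemmas ======================= -/

lemma getVert_edist_le {V : Type*} {G : SimpleGraph V} {a b : V} (p : G.Walk a b) :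
    ∀ s t : ℕ, s ≤ t → G.edist (p.getVert s) (p.getVert t) ≤ ((t - s : ℕ) : ℕ∞) := by
  induction p with
  | nil =>
    intro s t _
    simp [SimpleGraph.Walk.getVert, SimpleGraph.edist_self]
  | @cons u v w h q ih =>
    intro s t hst
    match s, t with
    | 0, 0 => simp [SimpleGraph.edist_self]
    | 0, (t+1) =>
      have h1 : G.edist u v ≤ 1 := (SimpleGraph.edist_eq_one_iff_adj.mpr h).le
      have h2 : G.edist v (q.getVert t) ≤ ((t : ℕ) : ℕ∞) := by
        simpa using ih 0 t (Nat.zero_le t)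
      calc G.edist ((q.cons h).getVert 0) ((q.cons h).getVert (t+1))
          = G.edist u (q.getVert t) := by
            rw [SimpleGraph.Walk.getVert_zero, SimpleGraph.Walk.getVert_cons_succ]
        _ ≤ G.edist u v + G.edist v (q.getVert t) := SimpleGraph.edist_triangle
        _ ≤ 1 + ((t : ℕ) : ℕ∞) := add_le_add h1 h2
        _ = (((t+1) - 0 : ℕ) : ℕ∞) := by
            rw [Nat.sub_zero]; push_cast; ring
    | (s+1), (t+1) =>
      simpa [SimpleGraph.Walk.getVert_cons_succ] using ih s t (by omega)

lemma cell_nonneg {V : Type*} [Fintype V] (G : SimpleGraph V) {k : ℕ}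
    (f : Fin k → V) (i : Fin k) (v : V) : 0 ≤ cell G f i v := by
  unfold cell
  split
  · positivity
  · exact le_refl _

lemma payoff_nonneg {V : Type*} [Fintype V] (G : SimpleGraph V) {k : ℕ}
    (f : Fin k → V) (i : Fin k) : 0 ≤ payoff G f i :=
  Finset.sum_nonneg fun v _ => cell_nonneg G f i v

lemma sum_cell {V : Type*} [Fintype V] (G : SimpleGraph V) {k : ℕ} (hk : 0 < k)
    (f : Fin k → V) (v : V) : ∑ i, cell G f i v = 1 := by
  have hne : Nonempty (Fin k) := ⟨⟨0, hk⟩⟩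
  obtain ⟨m, -, hm⟩ := Finset.exists_min_image Finset.univ
    (fun j => G.edist v (f j)) Finset.univ_nonempty
  have hinf : (⨅ j', G.edist v (f j')) = G.edist v (f m) :=
    le_antisymm (iInf_le _ m) (le_iInf fun j => hm j (Finset.mem_univ j))
  set S := Finset.univ.filter fun j => G.edist v (f j) = ⨅ j', G.edist v (f j') with hS
  have hmS : m ∈ S := by
    simp [hS, Finset.mem_filter, hinf]
  have hcard : (0 : ℚ) < S.card := by
    exact_mod_cast Finset.card_pos.mpr ⟨m, hmS⟩
  have hsum : ∑ i, cell G f i v = ∑ i ∈ S, (1 : ℚ) / S.card := by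
    rw [Finset.sum_filter]
    apply Finset.sum_congr rfl
    intro x _
    unfold cell
    split <;> simp_all
  rw [hsum, Finset.sum_const, nsmul_eq_mul]
  field_simp

lemma key_lemma {V : Type*} [Fintype V] (G : SimpleGraph V) {k : ℕ}
    (f : Fin k → V) (i j : Fin k) (v : V) {r : ℕ}
    (hre : G.edist v (f i) = (r : ℕ∞))
    (hinf : G.edist v (f i) = ⨅ j', G.edist v (f j')) :
    ∃ x, (r : ℚ) ≤ payoff G (Function.update f j x) j := by
  rcases Nat.eq_zero_or_pos r with hr0 | hr
  · exact ⟨v, by rw [hr0]; exact_mod_cast payoff_nonneg G _ j⟩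
  -- all facilities are at distance ≥ r from v
  have hfar : ∀ m, (r : ℕ∞) ≤ G.edist v (f m) := by
    intro m
    rw [← hre, hinf]
    exact iInf_le _ m
  obtain ⟨p, hp⟩ := SimpleGraph.exists_walk_of_edist_eq_coe hre
  set w := p.getVert (r - 1) with hw
  set f' := Function.update f j w with hf'
  refine ⟨w, ?_⟩
  -- distance facts along the walk
  have hvt : ∀ t, t ≤ r → G.edist v (p.getVert t) = (t : ℕ∞) := by
    intro t ht
    have h1 : G.edist v (p.getVert t) ≤ (t : ℕ∞) := by
      simpa using getVert_edist_le p 0 t (Nat.zero_le t)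
    have h2 : G.edist (p.getVert t) (f i) ≤ ((r - t : ℕ) : ℕ∞) := by
      have h2' := getVert_edist_le p t r (by omega)
      rwa [show p.getVert r = f i from
        SimpleGraph.Walk.getVert_of_length_le p (le_of_eq hp)] at h2'
    have h3 : (r : ℕ∞) ≤ G.edist v (p.getVert t) + ((r - t : ℕ) : ℕ∞) := by
      calc (r : ℕ∞) = G.edist v (f i) := hre.symm
        _ ≤ G.edist v (p.getVert t) + G.edist (p.getVert t) (f i) := SimpleGraph.edist_triangle
        _ ≤ G.edist v (p.getVert t) + ((r - t : ℕ) : ℕ∞) := add_le_add le_rfl h2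
    have h4 : (t : ℕ∞) ≤ G.edist v (p.getVert t) := by
      have h4' := tsub_le_iff_right.mpr h3
      rwa [← ENat.coe_sub, Nat.sub_sub_self ht] at h4'
    exact le_antisymm h1 h4
  -- every vertex p.getVert t, t < r, is fully captured by j after its deviation to w
  have hcell : ∀ t, t < r → cell G f' j (p.getVert t) = 1 := by
    intro t ht
    set u := p.getVert t with hu
    have huw : G.edist u w ≤ (((r - 1) - t : ℕ) : ℕ∞) := getVert_edist_le p t (r - 1) (by omega)
    have hmfar : ∀ m, ((r - t : ℕ) : ℕ∞) ≤ G.edist u (f m) := by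
      intro m
      have h1 : (r : ℕ∞) ≤ G.edist v u + G.edist u (f m) :=
        (hfar m).trans SimpleGraph.edist_triangle
      rw [hvt t (le_of_lt ht)] at h1
      have h1' := tsub_le_iff_left.mpr h1
      rwa [← ENat.coe_sub] at h1'
    have hlt : ∀ m, m ≠ j → G.edist u w < G.edist u (f' m) := by
      intro m hm
      rw [hf', Function.update_of_ne hm]
      calc G.edist u w ≤ (((r - 1) - t : ℕ) : ℕ∞) := huw
        _ < ((r - t : ℕ) : ℕ∞) := by exact_mod_cast (by omega : (r - 1) - t < r - t)
        _ ≤ G.edist u (f m) := hmfar m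
    have hij : (⨅ m', G.edist u (f' m')) = G.edist u w := by
      apply le_antisymm
      · have hfj : f' j = w := Function.update_self j w f
        simpa [hfj] using iInf_le (fun m' => G.edist u (f' m')) j
      · refine le_iInf fun m => ?_
        by_cases hm : m = j
        · subst hm; simp [hf', Function.update_self]
        · exact (hlt m hm).le
    have hSj : (Finset.univ.filter fun m => G.edist u (f' m) = ⨅ m', G.edist u (f' m')) = {j} := by
      ext m
      simp only [Finset.mem_filter, Finset.mem_univ, true_and, Finset.mem_singleton]
      constructor
      · intro hmem
        by_contra hm
        rw [hij] at hmem
        exact (ne_of_gt (hlt m hm)) hmem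
      · rintro rfl
        rw [hij, hf', Function.update_self]
    unfold cell
    rw [if_pos (by rw [hij, hf', Function.update_self]), hSj]
    norm_num
  -- the captured vertices are pairwise distinct
  have hinj : Set.InjOn p.getVert (Finset.range r) := by
    intro s hs t ht hst
    simp only [Finset.coe_range, Set.mem_Iio] at hs ht
    have h1 : ((s : ℕ∞)) = (t : ℕ∞) := by
      rw [← hvt s (le_of_lt hs), ← hvt t (le_of_lt ht), hst]
    exact_mod_cast h1
  set T := (Finset.range r).image p.getVert with hT
  have hcardT : T.card = r := by
    rw [hT, Finset.card_image_of_injOn hinj, Finset.card_range]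
  have hsumT : ∑ u ∈ T, cell G f' j u = (r : ℚ) := by
    have hone : ∀ u ∈ T, cell G f' j u = 1 := by
      intro u hu
      obtain ⟨t, ht, rfl⟩ := Finset.mem_image.mp hu
      exact hcell t (Finset.mem_range.mp ht)
    rw [Finset.sum_congr rfl hone, Finset.sum_const, hcardT, nsmul_eq_mul, mul_one]
  calc (r : ℚ) = ∑ u ∈ T, cell G f' j u := hsumT.symm
    _ ≤ ∑ u, cell G f' j u :=
        Finset.sum_le_sum_of_subset_of_nonneg (Finset.subset_univ T)
          (fun u _ _ => cell_nonneg G f' j u)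
    _ = payoff G f' j := rfl

/-- In any Nash equilibrium of the Voronoi game on a connected graph with `n` vertices
and `k` players, the radius of every player's Voronoi cell is at most `n/k + 1`. -/
theorem stmt14 {V : Type*} [Fintype V] [DecidableEq V] (G : SimpleGraph V)
    (hG : G.Connected) (k : ℕ) (hk : 0 < k) (hkn : k < Fintype.card V)
    (f : Fin k → V) (hf : IsNashEq G f) (i : Fin k) :
    (cellRadius G f i : ℚ) ≤ (Fintype.card V : ℚ) / k + 1 := by
  have hknat : Nonempty (Fin k) := ⟨⟨0, hk⟩⟩
  have hkQ : (0 : ℚ) < (k : ℚ) := by exact_mod_cast hk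
  -- some player has payoff at most n/k
  have hsumpay : ∑ j, payoff G f j = (Fintype.card V : ℚ) := by
    unfold payoff
    rw [Finset.sum_comm, Finset.sum_congr rfl fun v _ => sum_cell G hk f v]
    simp [Finset.card_univ]
  obtain ⟨j, -, hj⟩ : ∃ j ∈ Finset.univ, payoff G f j ≤ (Fintype.card V : ℚ) / k := by
    apply Finset.exists_le_of_sum_le Finset.univ_nonempty
    rw [hsumpay, Finset.sum_const, Finset.card_univ, Fintype.card_fin, nsmul_eq_mul]
    field_simp
    exact le_rfl
  -- pick the vertex attaining the radius
  have hfi : 0 < cell G f i (f i) := by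
    have hzero : (⨅ j', G.edist (f i) (f j')) = 0 :=
      le_antisymm ((iInf_le _ i).trans_eq (SimpleGraph.edist_self)) zero_le
    have hcond : G.edist (f i) (f i) = ⨅ j', G.edist (f i) (f j') := by
      rw [SimpleGraph.edist_self, hzero]
    have hmemi : i ∈ Finset.univ.filter
        fun m => G.edist (f i) (f m) = ⨅ j', G.edist (f i) (f j') := by
      simp only [Finset.mem_filter, Finset.mem_univ, true_and]
      exact hcond
    have hcpos : (0 : ℚ) < (Finset.univ.filter
        fun m => G.edist (f i) (f m) = ⨅ j', G.edist (f i) (f j')).card := by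
      exact_mod_cast Finset.card_pos.mpr ⟨i, hmemi⟩
    unfold cell
    rw [if_pos hcond]
    positivity
  unfold cellRadius
  set A := Finset.univ.filter fun v => 0 < cell G f i v with hA
  have hAne : A.Nonempty := ⟨f i, by simp [hA, hfi]⟩
  obtain ⟨v, hvmem, hveq⟩ := Finset.exists_mem_eq_sup A hAne
    fun v => (G.edist v (f i)).toNat
  rw [hveq]
  set r := (G.edist v (f i)).toNat with hr
  have hvcell : 0 < cell G f i v := by
    rw [hA, Finset.mem_filter] at hvmem
    exact hvmem.2
  have hnetop : G.edist v (f i) ≠ ⊤ :=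
    SimpleGraph.edist_ne_top_iff_reachable.mpr (hG v (f i))
  have hre : G.edist v (f i) = (r : ℕ∞) := (ENat.coe_toNat hnetop).symm
  have hcond : G.edist v (f i) = ⨅ j', G.edist v (f j') := by
    by_contra h
    unfold cell at hvcell
    rw [if_neg h] at hvcell
    exact lt_irrefl 0 hvcell
  obtain ⟨x, hx⟩ := key_lemma G f i j v hre hcond
  have hchain : (r : ℚ) ≤ (Fintype.card V : ℚ) / k := (hx.trans (hf j x)).trans hj
  linarith
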